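/- Let A be a (not necessarily unital) associative algebra satisfying a_1⋯a_n = a_{σ(1)}⋯a_{σ(n)} for some σ ∈ S_n with σ(n) ≠ n. Then for all a_1,...,a_n, y_1, y_2 ∈ A, one has a_1⋯a_n y_1 y_2 = a_1⋯a_n y_2 y_1. -/

import Mathlib

/-- Product of a nonempty list in a (non-unital) multiplicative structure;
junk value `0` for the empty list. -/
def listMul {A : Type*} [Mul A] [Zero A] : List A → A
  | [] => 0
  | [x] => x
  | x :: y :: l => x * listMul (y :: l)

/-- The product `a 0 * a 1 * ⋯ * a (k-1)`. -/
def finProd {A : Type*} [Mul A] [Zero A] {k : ℕ} (a : Fin k → A) : A :=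
  listMul (List.ofFn a)

section RCA

variable {A : Type*} [NonUnitalRing A]

private def pr (l : List A) : WithOne A := (l.map (fun x => (x : WithOne A))).prod

private lemma pr_nil : pr ([] : List A) = 1 := rfl

private lemma pr_cons (x : A) (l : List A) : pr (x :: l) = (x : WithOne A) * pr l := by
  simp [pr]

private lemma pr_append (l₁ l₂ : List A) : pr (l₁ ++ l₂) = pr l₁ * pr l₂ := by
  simp [pr]

private lemma coe_listMul : ∀ (l : List A), l ≠ [] → ((listMul l : A) : WithOne A) = pr l
  | [x], _ => by simp [listMul, pr]
  | x :: y :: l, _ => by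
      have h : listMul (x :: y :: l) = x * listMul (y :: l) := rfl
      rw [h, WithOne.coe_mul, coe_listMul (y :: l) (by simp)]
      simp [pr]

private lemma float {n : ℕ} (σ : Equiv.Perm (Fin (n + 1)))
    (hid : ∀ b : Fin (n + 1) → A, finProd b = finProd (fun i => b (σ i)))
    {p : ℕ} (hpn : p < n) (hps : ((σ⁻¹ (Fin.last n) : Fin (n + 1)) : ℕ) = p)
    (W : List A) (hW : W.length = p) (c d : A) (R : List A) (hR : R.length = n - p) :
    pr W * ((c : WithOne A) * ((d : WithOne A) * pr R)) =
      pr W * ((c : WithOne A) * (pr R * (d : WithOne A))) := by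
  have hlen : ∀ x : A, (W ++ x :: R).length = n + 1 := by
    intro x; simp [hW, hR]; omega
  obtain ⟨M, hM⟩ : ∃ M : WithOne A, ∀ x : A,
      M * (x : WithOne A) = pr W * ((x : WithOne A) * pr R) := by
    have key : ∀ (u v : A) (k : ℕ) (hk1 : k < (W ++ u :: R).length)
        (hk2 : k < (W ++ v :: R).length), k ≠ p →
        (W ++ u :: R)[k] = (W ++ v :: R)[k] := by
      intro u v k hk1 hk2 hkp
      rcases Nat.lt_or_ge k p with h | h
      · rw [List.getElem_append_left (by omega), List.getElem_append_left (by omega)]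
      · have h1 : p < k := lt_of_le_of_ne h (Ne.symm hkp)
        rw [List.getElem_append_right (by omega), List.getElem_append_right (by omega)]
        obtain ⟨m, hm⟩ : ∃ m, k - W.length = m + 1 := ⟨k - p - 1, by omega⟩
        simp only [hm, List.getElem_cons_succ]
    -- the element at position p is x
    have hgetp : ∀ (x : A) (hk : p < (W ++ x :: R).length), (W ++ x :: R)[p] = x := by
      intro x hk
      rw [List.getElem_append_right (by omega)]
      simp [hW]
    refine ⟨pr (List.ofFn (fun j : Fin n =>
      (W ++ (0 : A) :: R)[((σ⁻¹ (Fin.castSucc j) : Fin (n + 1)) : ℕ)]'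
        (by rw [hlen]; exact (σ⁻¹ (Fin.castSucc j)).isLt))), ?_⟩
    intro x
    set b : Fin (n + 1) → A := fun i =>
      (W ++ x :: R)[((σ⁻¹ i : Fin (n + 1)) : ℕ)]'
        (by rw [hlen]; exact (σ⁻¹ i).isLt) with hb
    have hA : ((finProd b : A) : WithOne A) = pr W * ((x : WithOne A) * pr R) := by
      rw [hid b]
      have h1 : (fun i => b (σ i)) = fun i : Fin (n + 1) =>
          (W ++ x :: R)[(i : ℕ)]'(by rw [hlen]; exact i.isLt) := by
        funext i
        simp only [hb, Equiv.Perm.inv_def, Equiv.symm_apply_apply]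
      rw [h1]
      have h2 : List.ofFn (fun i : Fin (n + 1) =>
          (W ++ x :: R)[(i : ℕ)]'(by rw [hlen]; exact i.isLt)) = W ++ x :: R := by
        apply List.ext_getElem (by simp [hlen])
        intro k h₁ h₂
        rw [List.getElem_ofFn]
      have h3 : finProd (fun i : Fin (n + 1) =>
          (W ++ x :: R)[(i : ℕ)]'(by rw [hlen]; exact i.isLt)) = listMul (W ++ x :: R) := by
        unfold finProd; rw [h2]
      rw [h3, coe_listMul _ (by simp), pr_append, pr_cons]
    have hB : ((finProd b : A) : WithOne A) =
        pr (List.ofFn (fun j : Fin n =>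
          (W ++ (0 : A) :: R)[((σ⁻¹ (Fin.castSucc j) : Fin (n + 1)) : ℕ)]'
            (by rw [hlen]; exact (σ⁻¹ (Fin.castSucc j)).isLt))) * (x : WithOne A) := by
      have h4 : finProd b = listMul ((List.ofFn (fun j : Fin n => b (Fin.castSucc j))) ++
          [b (Fin.last n)]) := by
        unfold finProd
        rw [List.ofFn_succ', List.concat_eq_append]
      rw [h4, coe_listMul _ (by simp), pr_append, pr_cons, pr_nil, mul_one]
      have h5 : b (Fin.last n) = x := by
        simp only [hb]
        have hps' : ((σ⁻¹ (Fin.last n) : Fin (n + 1)) : ℕ) = p := hps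
        simp only [hps']
        exact hgetp x (by rw [hlen]; omega)
      have h8 : (fun j : Fin n => b j.castSucc) = (fun j : Fin n =>
          (W ++ (0 : A) :: R)[((σ⁻¹ (Fin.castSucc j) : Fin (n + 1)) : ℕ)]'
            (by rw [hlen]; exact (σ⁻¹ (Fin.castSucc j)).isLt)) := by
        funext j
        simp only [hb]
        apply key
        intro hcon
        have h6 : (σ⁻¹ (Fin.castSucc j) : Fin (n + 1)) = σ⁻¹ (Fin.last n) := by
          apply Fin.ext
          rw [hcon, hps]
        have h7 : Fin.castSucc j = Fin.last n := σ⁻¹.injective h6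
        exact (Fin.castSucc_lt_last j).ne h7
      rw [h5, h8]
    rw [← hB, hA]
  calc pr W * ((c : WithOne A) * ((d : WithOne A) * pr R))
      = pr W * (((c * d : A) : WithOne A) * pr R) := by
        rw [WithOne.coe_mul]; simp [mul_assoc]
    _ = M * ((c * d : A) : WithOne A) := (hM _).symm
    _ = M * (c : WithOne A) * (d : WithOne A) := by rw [WithOne.coe_mul, mul_assoc]
    _ = pr W * ((c : WithOne A) * pr R) * (d : WithOne A) := by rw [hM]
    _ = pr W * ((c : WithOne A) * (pr R * (d : WithOne A))) := by simp [mul_assoc]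

end RCA

theorem right_commutator_absorbed {F A : Type*} [Field F] [NonUnitalRing A] [Module F A]
    [SMulCommClass F A A] [IsScalarTower F A A]
    (n : ℕ) (σ : Equiv.Perm (Fin (n + 1))) (hσ : σ (Fin.last n) ≠ Fin.last n)
    (hid : ∀ b : Fin (n + 1) → A, finProd b = finProd (fun i => b (σ i)))
    (y₁ y₂ : A) (a : Fin (n + 1) → A) :
    finProd a * (y₁ * y₂) = finProd a * (y₂ * y₁) := by
  have hs : σ⁻¹ (Fin.last n) ≠ Fin.last n := by
    intro h
    have h2 := congrArg σ h
    rw [Equiv.Perm.inv_def, Equiv.apply_symm_apply] at h2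
    exact hσ h2.symm
  set p := ((σ⁻¹ (Fin.last n) : Fin (n + 1)) : ℕ) with hpdef
  have hpn : p < n := by
    have h1 : p < n + 1 := (σ⁻¹ (Fin.last n)).isLt
    have h2 : p ≠ n := by
      intro h
      exact hs (Fin.ext (by rw [Fin.val_last]; exact h))
    omega
  -- float with flexible lengths
  have float' : ∀ (L : List A), p + 1 ≤ L.length → ∀ (d : A) (R : List A), n - p ≤ R.length →
      pr L * ((d : WithOne A) * pr R) = pr L * (pr R * (d : WithOne A)) := by
    intro L hL d R hR
    have hW : (L.take p).length = p := by rw [List.length_take]; omega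
    have hdropne : L.drop p ≠ [] := by
      apply List.ne_nil_of_length_pos
      rw [List.length_drop]
      omega
    have hRtakene : R.take (R.length - (n - p) + 1) ≠ [] := by
      apply List.ne_nil_of_length_pos
      rw [List.length_take]
      omega
    set c := listMul (L.drop p) with hc
    set Rq := listMul (R.take (R.length - (n - p) + 1)) :: R.drop (R.length - (n - p) + 1)
      with hRq
    have hRqlen : Rq.length = n - p := by
      rw [hRq, List.length_cons, List.length_drop]
      omega
    have hprL : pr L = pr (L.take p) * (c : WithOne A) := by
      conv_lhs => rw [← List.take_append_drop p L]
      rw [pr_append, coe_listMul _ hdropne]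
    have hprRq : pr Rq = pr R := by
      rw [hRq, pr_cons, coe_listMul _ hRtakene, ← pr_append, List.take_append_drop]
    have hfl := float σ hid hpn hpdef.symm (L.take p) hW c d Rq hRqlen
    rw [hprRq] at hfl
    rw [hprL, mul_assoc, mul_assoc, hfl]
  -- the prefix and tail
  set Ω := (List.ofFn a).take (p + 1) with hΩdef
  set T := (List.ofFn a).drop (p + 1) with hTdef
  have hΩlen : Ω.length = p + 1 := by
    rw [hΩdef, List.length_take, List.length_ofFn]
    omega
  have hTlen : T.length = n - p := by
    rw [hTdef, List.length_drop, List.length_ofFn]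
    omega
  have rot1 : ∀ (l : List A), n - p + 1 ≤ l.length →
      pr Ω * pr l = pr Ω * pr (l.rotate 1) := by
    intro l hl
    match l with
    | [] => simp at hl
    | x :: l' =>
      have hrot : (x :: l').rotate 1 = l' ++ [x] := by
        rw [List.rotate_cons_succ, List.rotate_zero]
      rw [hrot, pr_cons, pr_append, pr_cons, pr_nil, mul_one]
      exact float' Ω (by omega) x l' (by simp only [List.length_cons] at hl; omega)
  have rotk : ∀ (k : ℕ) (l : List A), n - p + 1 ≤ l.length →
      pr Ω * pr l = pr Ω * pr (l.rotate k) := by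
    intro k
    induction k with
    | zero => intro l hl; rw [List.rotate_zero]
    | succ m ih =>
      intro l hl
      rw [ih l hl, ← List.rotate_rotate]
      exact rot1 (l.rotate m) (by rw [List.length_rotate]; exact hl)
  rw [← WithOne.coe_inj (α := A)]
  have hfa : ((finProd a : A) : WithOne A) = pr Ω * pr T := by
    have h0 : finProd a = listMul (List.ofFn a) := rfl
    rw [h0, coe_listMul _ (by simp)]
    conv_lhs => rw [← List.take_append_drop (p + 1) (List.ofFn a)]
    rw [pr_append]
  rw [WithOne.coe_mul, WithOne.coe_mul, WithOne.coe_mul, WithOne.coe_mul, hfa]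
  have step1 : pr Ω * pr (T ++ [y₁, y₂]) = pr Ω * pr ([y₁, y₂] ++ T) := by
    rw [rotk (n - p) (T ++ [y₁, y₂]) (by rw [List.length_append, hTlen]; simp)]
    have hrot : (T ++ [y₁, y₂]).rotate (n - p) = [y₁, y₂] ++ T := by
      rw [List.rotate_eq_drop_append_take (by rw [List.length_append, hTlen]; simp),
        List.drop_left' hTlen, List.take_left' hTlen]
    rw [hrot]
  have step2 : pr (Ω ++ [y₁]) * ((y₂ : WithOne A) * pr T) =
      pr (Ω ++ [y₁]) * (pr T * (y₂ : WithOne A)) :=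
    float' (Ω ++ [y₁]) (by rw [List.length_append, hΩlen]; simp) y₂ T (le_of_eq hTlen.symm)
  have step3 : pr Ω * ((y₁ : WithOne A) * pr (T ++ [y₂])) =
      pr Ω * (pr (T ++ [y₂]) * (y₁ : WithOne A)) :=
    float' Ω (by omega) y₁ (T ++ [y₂]) (by rw [List.length_append, hTlen]; simp)
  calc pr Ω * pr T * ((y₁ : WithOne A) * (y₂ : WithOne A))
      = pr Ω * pr (T ++ [y₁, y₂]) := by
        simp [pr_append, pr_cons, pr_nil, mul_assoc]
    _ = pr Ω * pr ([y₁, y₂] ++ T) := step1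
    _ = pr (Ω ++ [y₁]) * ((y₂ : WithOne A) * pr T) := by
        simp [pr_append, pr_cons, pr_nil, mul_assoc]
    _ = pr (Ω ++ [y₁]) * (pr T * (y₂ : WithOne A)) := step2
    _ = pr Ω * ((y₁ : WithOne A) * pr (T ++ [y₂])) := by
        simp [pr_append, pr_cons, pr_nil, mul_assoc]
    _ = pr Ω * (pr (T ++ [y₂]) * (y₁ : WithOne A)) := step3
    _ = pr Ω * pr T * ((y₂ : WithOne A) * (y₁ : WithOne A)) := by
        simp [pr_append, pr_cons, pr_nil, mul_assoc]
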